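/- Let B₀ = γ⁻¹ I with γ > 0, and for j = 0,…,k-1 let B_{j+1} = B_j - (1/(s_jᵀB_j s_j)) B_j s_j s_jᵀ B_j + (1/(y_jᵀ s_j)) y_j y_jᵀ, where each pair satisfies y_jᵀ s_j > 0 and s_j ≠ 0. Then the largest eigenvalue of B_k satisfies λ_max(B_k) ≤ γ⁻¹ + Σ_{j=0}^{k-1} ‖y_j‖² / (y_jᵀ s_j). -/

import Mathlib

open Matrix

lemma vecMulVec_mulVec' {n : ℕ} (a b w : Fin n → ℝ) :
    vecMulVec a b *ᵥ w = (b ⬝ᵥ w) • a := by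
  ext i
  simp only [mulVec, vecMulVec_apply, dotProduct, Pi.smul_apply, smul_eq_mul, Finset.sum_mul]
  exact Finset.sum_congr rfl fun x _ => by ring

lemma vecMulVec_transpose' {n : ℕ} (a b : Fin n → ℝ) :
    (vecMulVec a b)ᵀ = vecMulVec b a := by
  ext i j
  simp [vecMulVec_apply, mul_comm]

lemma symm_dot {n : ℕ} (A : Matrix (Fin n) (Fin n) ℝ) (hA : Aᵀ = A) (v w : Fin n → ℝ) :
    v ⬝ᵥ A *ᵥ w = w ⬝ᵥ A *ᵥ v := by
  nth_rewrite 1 [← hA]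
  rw [dotProduct_mulVec, vecMul_transpose, dotProduct_comm]

theorem lbfgs_lambdaMax_bound {n k : ℕ} (γ : ℝ) (hγ : 0 < γ)
    (s y : ℕ → (Fin n → ℝ)) (B : ℕ → Matrix (Fin n) (Fin n) ℝ)
    (hB0 : B 0 = γ⁻¹ • (1 : Matrix (Fin n) (Fin n) ℝ))
    (hrec : ∀ j < k, B (j + 1) =
      B j - (1 / (s j ⬝ᵥ B j *ᵥ s j)) • (B j * vecMulVec (s j) (s j) * B j)
          + (1 / (y j ⬝ᵥ s j)) • vecMulVec (y j) (y j))
    (hys : ∀ j < k, 0 < y j ⬝ᵥ s j) (hs : ∀ j < k, s j ≠ 0) :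
    ∀ (hBk : (B k).IsHermitian) (lamMax : ℝ),
      IsGreatest (Set.range hBk.eigenvalues) lamMax →
      lamMax ≤ γ⁻¹ + ∑ j ∈ Finset.range k, (y j ⬝ᵥ y j) / (y j ⬝ᵥ s j) := by
  intro hBk lamMax hlam
  have main : ∀ j, j ≤ k → (B j)ᵀ = B j ∧ (∀ v, 0 ≤ v ⬝ᵥ B j *ᵥ v) ∧
      (∀ v : Fin n → ℝ, v ⬝ᵥ B j *ᵥ v ≤
        (γ⁻¹ + ∑ i ∈ Finset.range j, (y i ⬝ᵥ y i) / (y i ⬝ᵥ s i)) * (v ⬝ᵥ v)) := by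
    intro j
    induction j with
    | zero =>
      intro _
      have hmul : ∀ v : Fin n → ℝ, v ⬝ᵥ B 0 *ᵥ v = γ⁻¹ * (v ⬝ᵥ v) := by
        intro v
        rw [hB0, smul_mulVec, one_mulVec, dotProduct_smul, smul_eq_mul]
      have hvv : ∀ v : Fin n → ℝ, 0 ≤ v ⬝ᵥ v := fun v =>
        Finset.sum_nonneg fun i _ => mul_self_nonneg _
      refine ⟨by rw [hB0]; simp [Matrix.transpose_smul], fun v => ?_, fun v => ?_⟩
      · rw [hmul]
        exact mul_nonneg (by positivity) (hvv v)
      · rw [hmul]; simp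
    | succ j ih =>
      intro hj
      have hjk : j < k := hj
      obtain ⟨hsym, hpos, hbd⟩ := ih (le_of_lt hjk)
      set c := s j ⬝ᵥ B j *ᵥ s j with hc
      have hc0 : 0 ≤ c := hpos (s j)
      have hd : 0 < y j ⬝ᵥ s j := hys j hjk
      have hquad : ∀ v : Fin n → ℝ, v ⬝ᵥ B (j+1) *ᵥ v =
          v ⬝ᵥ B j *ᵥ v - (1/c) * (v ⬝ᵥ B j *ᵥ s j)^2
            + (1/(y j ⬝ᵥ s j)) * (y j ⬝ᵥ v)^2 := by
        intro v
        rw [hrec j hjk, add_mulVec, sub_mulVec, smul_mulVec, smul_mulVec,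
          dotProduct_add, dotProduct_sub, dotProduct_smul, dotProduct_smul]
        congr 1
        · congr 1
          rw [Matrix.mul_assoc, ← mulVec_mulVec, ← mulVec_mulVec, vecMulVec_mulVec',
            mulVec_smul, dotProduct_smul, smul_eq_mul, smul_eq_mul]
          rw [symm_dot (B j) hsym (s j) v]
          ring
        · rw [vecMulVec_mulVec', dotProduct_smul, smul_eq_mul, smul_eq_mul,
            dotProduct_comm v (y j)]
          ring
      have hsub : ∀ v : Fin n → ℝ, 0 ≤ (1/c) * (v ⬝ᵥ B j *ᵥ s j)^2 ∧
          (1/c) * (v ⬝ᵥ B j *ᵥ s j)^2 ≤ v ⬝ᵥ B j *ᵥ v := by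
        intro v
        constructor
        · exact mul_nonneg (by positivity) (sq_nonneg _)
        · rcases eq_or_lt_of_le hc0 with h0 | h0
          · rw [← h0]; simpa using hpos v
          · have hdisc : discrim c (2 * (v ⬝ᵥ B j *ᵥ s j)) (v ⬝ᵥ B j *ᵥ v) ≤ 0 := by
              apply discrim_le_zero
              intro t
              have h := hpos (v + t • s j)
              have hexp : (v + t • s j) ⬝ᵥ B j *ᵥ (v + t • s j) =
                  c * t^2 + 2 * (v ⬝ᵥ B j *ᵥ s j) * t + v ⬝ᵥ B j *ᵥ v := by
                rw [mulVec_add, mulVec_smul, dotProduct_add, add_dotProduct,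
                  add_dotProduct, smul_dotProduct, dotProduct_smul, dotProduct_smul,
                  smul_dotProduct]
                rw [symm_dot (B j) hsym (s j) v]
                simp only [smul_eq_mul, hc]
                ring
              linarith [hexp ▸ h]
            rw [discrim] at hdisc
            rw [div_mul_eq_mul_div, one_mul, div_le_iff₀ h0]
            nlinarith
      have hpos' : ∀ v : Fin n → ℝ, 0 ≤ v ⬝ᵥ B (j+1) *ᵥ v := by
        intro v
        rw [hquad v]
        have h1 := (hsub v).2
        have h2 : 0 ≤ (1/(y j ⬝ᵥ s j)) * (y j ⬝ᵥ v)^2 :=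
          mul_nonneg (by positivity) (sq_nonneg _)
        linarith
      refine ⟨?_, hpos', fun v => ?_⟩
      · rw [hrec j hjk]
        simp only [transpose_add, transpose_sub, transpose_smul, transpose_mul,
          vecMulVec_transpose', hsym]
        rw [Matrix.mul_assoc]
      · rw [hquad v, Finset.sum_range_succ]
        have hCS : (y j ⬝ᵥ v)^2 ≤ (y j ⬝ᵥ y j) * (v ⬝ᵥ v) := by
          simp only [dotProduct, ← sq]
          exact Finset.sum_mul_sq_le_sq_mul_sq Finset.univ (y j) v
        have h1 := (hsub v).1
        have hb := hbd v
        have h3 : (1/(y j ⬝ᵥ s j)) * (y j ⬝ᵥ v)^2 ≤ (y j ⬝ᵥ y j)/(y j ⬝ᵥ s j) * (v ⬝ᵥ v) := by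
          rw [div_mul_eq_mul_div, one_mul, div_mul_eq_mul_div]
          gcongr
        calc v ⬝ᵥ B j *ᵥ v - (1/c) * (v ⬝ᵥ B j *ᵥ s j)^2 + (1/(y j ⬝ᵥ s j)) * (y j ⬝ᵥ v)^2
            ≤ (γ⁻¹ + ∑ i ∈ Finset.range j, (y i ⬝ᵥ y i) / (y i ⬝ᵥ s i)) * (v ⬝ᵥ v)
              + (y j ⬝ᵥ y j)/(y j ⬝ᵥ s j) * (v ⬝ᵥ v) := by linarith
          _ = (γ⁻¹ + (∑ i ∈ Finset.range j, (y i ⬝ᵥ y i) / (y i ⬝ᵥ s i)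
              + (y j ⬝ᵥ y j)/(y j ⬝ᵥ s j))) * (v ⬝ᵥ v) := by ring
  obtain ⟨_, _, hbd⟩ := main k le_rfl
  obtain ⟨i, hi⟩ := hlam.1
  set v : Fin n → ℝ := ⇑(hBk.eigenvectorBasis i) with hv
  have hmv : B k *ᵥ v = hBk.eigenvalues i • v := hBk.mulVec_eigenvectorBasis i
  have hnorm : v ⬝ᵥ v = 1 := by
    have h1 : ‖hBk.eigenvectorBasis i‖ = 1 := hBk.eigenvectorBasis.orthonormal.1 i
    have h2 : (inner ℝ (hBk.eigenvectorBasis i) (hBk.eigenvectorBasis i) : ℝ) = 1 := by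
      rw [real_inner_self_eq_norm_mul_norm, h1, mul_one]
    rw [← h2]
    simp only [PiLp.inner_apply, RCLike.inner_apply, conj_trivial, dotProduct]
    rfl
  have heq : v ⬝ᵥ B k *ᵥ v = hBk.eigenvalues i := by
    rw [hmv, dotProduct_smul, smul_eq_mul, hnorm, mul_one]
  have := hbd v
  rw [heq, hnorm, mul_one] at this
  rw [← hi]
  exact this
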